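/- Let n ∈ ℕ₊, α ∈ (0, 1/2), set σ = α²/(2(1−α)) and β = (α−σ)/(1 + α/√(2n)) (note σ < α, so β > 0). Let H̃ ∈ ℝ^{n×n} be symmetric positive semidefinite, λ ≥ 0, Ω = [I, −I] ∈ ℝ^{n×2n}, τ > 0, and let x, s ∈ ℝ^{2n} have all components positive with ‖x ⊙ s − τe‖ ≤ ατ. Suppose Δz ∈ ℝ^n and Δx, Δs ∈ ℝ^{2n} satisfy the exact Newton system: 2λH̃Δz + ΩΔx = 0, ΩᵀΔz + Δs = 0, and s ⊙ Δx + x ⊙ Δs = τe − x ⊙ s. Then the next iterate x⁺ = x + Δx, s⁺ = s + Δs and τ⁺ = (1 − β/√(2n))·τ satisfy: every component of x⁺ and of s⁺ is nonnegative, and ‖x⁺ ⊙ s⁺ − τ⁺e‖ ≤ α·τ⁺. -/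

import Mathlib

open Matrix

/-- Euclidean norm of a finitely-indexed real vector. -/
noncomputable def enorm' {ι : Type*} [Fintype ι] (v : ι → ℝ) : ℝ :=
  Real.sqrt (∑ i, v i ^ 2)

set_option maxHeartbeats 1000000 in
/-- Corollary 1 of the paper, one step: the next iterate of the exact
Newton step is nonnegative and stays in the `α`-neighborhood of the central path with
`τ⁺ = (1 − β/√(2n))τ`, where `σ = α²/(2(1−α))` and `β = (α−σ)/(1 + α/√(2n))`. -/
theorem exact_newton_step_invariance (n : ℕ) (hn : 0 < n)
    (α σ β : ℝ) (hα : α ∈ Set.Ioo (0:ℝ) (1/2))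
    (hσ : σ = α ^ 2 / (2 * (1 - α)))
    (hβ : β = (α - σ) / (1 + α / Real.sqrt (2 * n)))
    (Ht : Matrix (Fin n) (Fin n) ℝ) (hHt : Ht.PosSemidef)
    (lam : ℝ) (hlam : 0 ≤ lam)
    (Ω : Matrix (Fin n) (Fin n ⊕ Fin n) ℝ)
    (hΩ : Ω = Matrix.fromCols (1 : Matrix (Fin n) (Fin n) ℝ) (-1))
    (τ : ℝ) (hτ : 0 < τ)
    (x s : Fin n ⊕ Fin n → ℝ)
    (hx : ∀ i, 0 < x i) (hs : ∀ i, 0 < s i)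
    (hcen : enorm' (fun i => x i * s i - τ) ≤ α * τ)
    (Δz : Fin n → ℝ) (Δx Δs : Fin n ⊕ Fin n → ℝ)
    (heq1 : (2 * lam) • Ht.mulVec Δz + Ω.mulVec Δx = 0)
    (heq2 : Ωᵀ.mulVec Δz + Δs = 0)
    (heq3 : (fun i => s i * Δx i + x i * Δs i) = fun i => τ - x i * s i)
    (xp sp : Fin n ⊕ Fin n → ℝ)
    (hxp : xp = x + Δx) (hsp : sp = s + Δs)
    (τp : ℝ) (hτp : τp = (1 - β / Real.sqrt (2 * n)) * τ) :
    (∀ i, 0 ≤ xp i) ∧ (∀ i, 0 ≤ sp i) ∧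
    enorm' (fun i => xp i * sp i - τp) ≤ α * τp := by
  obtain ⟨hα0, hα2⟩ := hα
  set r := Real.sqrt (2 * n) with hr_def
  have hr_def' : r = Real.sqrt (2 * n) := hr_def
  clear_value r
  -- basic facts about r
  have h2n : (1:ℝ) ≤ 2 * n := by
    have h : (1:ℝ) ≤ (n:ℝ) := by exact_mod_cast hn
    linarith only [h]
  have hr1 : 1 ≤ r := by
    rw [hr_def', show (1:ℝ) = Real.sqrt 1 by simp]
    exact Real.sqrt_le_sqrt h2n
  have hr0 : 0 < r := lt_of_lt_of_le one_pos hr1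
  have hr2 : r ^ 2 = 2 * n := by rw [hr_def']; exact Real.sq_sqrt (by linarith only [h2n])
  -- basic facts about σ and β
  have h1a : (0:ℝ) < 1 - α := by linarith only [hα2]
  have hσ0 : 0 < σ := by rw [hσ]; positivity
  have hσα : σ < α := by
    rw [hσ, div_lt_iff₀ (by linarith only [h1a])]
    nlinarith only [mul_pos hα0 (show (0:ℝ) < 2 - 3*α by linarith only [hα2])]
  have hσ1 : σ < 1 := by linarith only [hσα, hα2]
  have hσsq : σ ^ 2 ≤ σ := by nlinarith only [hσ0, hσ1]
  have h1ar : (0:ℝ) < 1 + α / r := by positivity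
  have hβprod : β * (1 + α / r) = α - σ := by
    rw [hβ]; field_simp
  have hβ0 : 0 < β := by
    rw [hβ]; exact div_pos (by linarith only [hσα]) h1ar
  have hβr : β / r < 1 := by
    rw [div_lt_one hr0]
    linarith only [hβprod, hσ0, hα2, hr1, mul_pos hβ0 (div_pos hα0 hr0)]
  -- componentwise Newton equation
  have heq3' : ∀ i, s i * Δx i + x i * Δs i = τ - x i * s i := fun i => congrFun heq3 i
  have hp : ∀ i, 0 < x i * s i := fun i => mul_pos (hx i) (hs i)
  -- centrality in squared form
  have hsum_nonneg : (0:ℝ) ≤ ∑ i, (x i * s i - τ) ^ 2 :=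
    Finset.sum_nonneg fun i _ => sq_nonneg _
  have hcen2 : ∑ i, (x i * s i - τ) ^ 2 ≤ (α * τ) ^ 2 := by
    unfold enorm' at hcen
    calc ∑ i, (x i * s i - τ) ^ 2
        = (Real.sqrt (∑ i, (x i * s i - τ) ^ 2)) ^ 2 := (Real.sq_sqrt hsum_nonneg).symm
      _ ≤ (α * τ) ^ 2 := by
          apply pow_le_pow_left₀ (Real.sqrt_nonneg _) hcen
  have hplo : ∀ i, (1 - α) * τ ≤ x i * s i := by
    intro i
    have hi : (x i * s i - τ) ^ 2 ≤ (α * τ) ^ 2 :=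
      le_trans (Finset.single_le_sum (f := fun j => (x j * s j - τ) ^ 2)
        (fun j _ => sq_nonneg _) (Finset.mem_univ i)) hcen2
    nlinarith only [hi, mul_pos hα0 hτ, sq_nonneg (x i * s i - τ + α * τ)]
  -- orthogonality: ∑ Δx i * Δs i ≥ 0
  have hΔs' : Δs = -(Ωᵀ.mulVec Δz) := eq_neg_of_add_eq_zero_right heq2
  have hΩx : Ω.mulVec Δx = -((2 * lam) • Ht.mulVec Δz) := eq_neg_of_add_eq_zero_right heq1
  have hS : 0 ≤ ∑ i, Δx i * Δs i := by
    have h1 : ∑ i, Δx i * Δs i = Δx ⬝ᵥ Δs := rfl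
    have h2 : Δx ⬝ᵥ Δs = (2 * lam) * (Δz ⬝ᵥ Ht.mulVec Δz) := by
      rw [hΔs', dotProduct_neg, Matrix.dotProduct_mulVec, Matrix.vecMul_transpose,
        hΩx, neg_dotProduct, neg_neg, smul_dotProduct, smul_eq_mul,
        dotProduct_comm]
    have h3 : 0 ≤ Δz ⬝ᵥ Ht.mulVec Δz := by
      have := hHt.dotProduct_mulVec_nonneg Δz
      simpa using this
    rw [h1, h2]
    exact mul_nonneg (by linarith only [hlam]) h3
  clear heq1 heq2 heq3 hΩ hΔs' hΩx hcen hHt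
  -- P := ∑ max(Δx i * Δs i) 0 ≤ σ τ / 2
  have hD : (0:ℝ) < 4 * ((1 - α) * τ) := mul_pos (by norm_num) (mul_pos h1a hτ)
  have hPK : (∑ i, max (Δx i * Δs i) 0) ≤ σ * τ / 2 := by
    have hterm : ∀ i, max (Δx i * Δs i) 0 * (4 * ((1 - α) * τ)) ≤ (x i * s i - τ) ^ 2 := by
      intro i
      have hid : (x i * s i - τ) ^ 2
          = (s i * Δx i - x i * Δs i) ^ 2 + 4 * (x i * s i) * (Δx i * Δs i) := by
        linear_combination (x i * s i - τ - s i * Δx i - x i * Δs i) * heq3' i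
      rcases le_total (Δx i * Δs i) 0 with h | h
      · rw [max_eq_right h, zero_mul]; exact sq_nonneg _
      · rw [max_eq_left h]
        have h1 : Δx i * Δs i * (4 * ((1 - α) * τ)) ≤ Δx i * Δs i * (4 * (x i * s i)) := by
          apply mul_le_mul_of_nonneg_left _ h
          linarith only [hplo i]
        linarith only [hid, sq_nonneg (s i * Δx i - x i * Δs i), h1]
    have hsum : (∑ i, max (Δx i * Δs i) 0) * (4 * ((1 - α) * τ)) ≤ (α * τ) ^ 2 := by
      rw [Finset.sum_mul]
      calc ∑ i, max (Δx i * Δs i) 0 * (4 * ((1 - α) * τ))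
          ≤ ∑ i, (x i * s i - τ) ^ 2 := Finset.sum_le_sum fun i _ => hterm i
        _ ≤ (α * τ) ^ 2 := hcen2
    have hDeq : σ * τ / 2 * (4 * ((1 - α) * τ)) = (α * τ) ^ 2 := by
      rw [hσ]; field_simp; ring
    exact le_of_mul_le_mul_right (by linarith only [hsum, hDeq]) hD
  -- Mizuno: Q := ∑ (Δx i * Δs i)^2 ≤ σ²τ²/2
  have habs : ∀ y : ℝ, max y 0 - max (-y) 0 = y := by
    intro y
    rcases le_total y 0 with h | h
    · rw [max_eq_right h, max_eq_left (neg_nonneg.2 h)]; ring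
    · rw [max_eq_left h, max_eq_right (neg_nonpos.2 h)]; ring
  have hsq_split : ∀ y : ℝ, y ^ 2 = (max y 0) ^ 2 + (max (-y) 0) ^ 2 := by
    intro y
    rcases le_total y 0 with h | h
    · rw [max_eq_right h, max_eq_left (neg_nonneg.2 h)]; ring
    · rw [max_eq_left h, max_eq_right (neg_nonpos.2 h)]; ring
  have hPNS : (∑ i, max (Δx i * Δs i) 0) - (∑ i, max (-(Δx i * Δs i)) 0)
      = ∑ i, Δx i * Δs i := by
    rw [← Finset.sum_sub_distrib]
    exact Finset.sum_congr rfl fun i _ => habs _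
  have hP_nonneg : (0:ℝ) ≤ ∑ i, max (Δx i * Δs i) 0 :=
    Finset.sum_nonneg fun i _ => le_max_right _ _
  have hN_nonneg : (0:ℝ) ≤ ∑ i, max (-(Δx i * Δs i)) 0 :=
    Finset.sum_nonneg fun i _ => le_max_right _ _
  have hNP : (∑ i, max (-(Δx i * Δs i)) 0) ≤ ∑ i, max (Δx i * Δs i) 0 := by
    linarith only [hPNS, hS]
  have hQ : ∑ i, (Δx i * Δs i) ^ 2 ≤ σ ^ 2 * τ ^ 2 / 2 := by
    have e1 : ∑ i, (Δx i * Δs i) ^ 2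
        = (∑ i, (max (Δx i * Δs i) 0) ^ 2) + ∑ i, (max (-(Δx i * Δs i)) 0) ^ 2 := by
      rw [← Finset.sum_add_distrib]
      exact Finset.sum_congr rfl fun i _ => hsq_split _
    have e2 : (∑ i, (max (Δx i * Δs i) 0) ^ 2) ≤ (∑ i, max (Δx i * Δs i) 0) ^ 2 :=
      Finset.sum_sq_le_sq_sum_of_nonneg fun i _ => le_max_right _ _
    have e3 : (∑ i, (max (-(Δx i * Δs i)) 0) ^ 2) ≤ (∑ i, max (-(Δx i * Δs i)) 0) ^ 2 :=
      Finset.sum_sq_le_sq_sum_of_nonneg fun i _ => le_max_right _ _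
    have hP2 : (∑ i, max (Δx i * Δs i) 0) ^ 2 ≤ (σ * τ / 2) ^ 2 := by
      nlinarith only [hPK, hP_nonneg]
    have hN2 : (∑ i, max (-(Δx i * Δs i)) 0) ^ 2 ≤ (σ * τ / 2) ^ 2 := by
      nlinarith only [hNP, hPK, hN_nonneg]
    nlinarith only [e1, e2, e3, hP2, hN2]
  have hQ_nonneg : (0:ℝ) ≤ ∑ i, (Δx i * Δs i) ^ 2 :=
    Finset.sum_nonneg fun i _ => sq_nonneg _
  -- product formula for the next iterate
  have hprod_eq : ∀ i, xp i * sp i = τ + Δx i * Δs i := by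
    intro i
    rw [hxp, hsp]
    simp only [Pi.add_apply]
    linear_combination heq3' i
  -- per-component lower bound on Δx i * Δs i, hence positivity of products
  have hprod_pos : ∀ i, 0 < xp i * sp i := by
    intro i
    rw [hprod_eq i]
    have hi : (Δx i * Δs i) ^ 2 ≤ σ ^ 2 * τ ^ 2 / 2 :=
      le_trans (Finset.single_le_sum (f := fun j => (Δx j * Δs j) ^ 2)
        (fun j _ => sq_nonneg _) (Finset.mem_univ i)) hQ
    nlinarith only [hi, sq_nonneg (Δx i * Δs i + τ), mul_pos hτ hτ, hσsq, hσ1, hσ0, hτ]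
  have hsum2 : ∀ i, s i * xp i + x i * sp i = x i * s i + τ := by
    intro i
    rw [hxp, hsp]
    simp only [Pi.add_apply]
    linear_combination heq3' i
  have hxp_pos : ∀ i, 0 < xp i := by
    intro i
    rcases mul_pos_iff.mp (hprod_pos i) with ⟨h1, _⟩ | ⟨h1, h2⟩
    · exact h1
    · exfalso
      linarith only [mul_pos (hs i) (neg_pos.2 h1), mul_pos (hx i) (neg_pos.2 h2),
        hp i, hτ, hsum2 i]
  have hsp_pos : ∀ i, 0 < sp i := by
    intro i
    rcases mul_pos_iff.mp (hprod_pos i) with ⟨_, h2⟩ | ⟨h1, h2⟩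
    · exact h2
    · exfalso
      linarith only [mul_pos (hs i) (neg_pos.2 h1), mul_pos (hx i) (neg_pos.2 h2),
        hp i, hτ, hsum2 i]
  refine ⟨fun i => (hxp_pos i).le, fun i => (hsp_pos i).le, ?_⟩
  -- final norm bound
  have hd : τ - τp = β * τ / r := by
    rw [hτp]; field_simp; ring
  set d := β * τ / r with hd_def
  have hd_def' : d = β * τ / r := hd_def
  clear_value d
  have hd0 : 0 < d := by rw [hd_def']; positivity
  have hrw : ∀ i, xp i * sp i - τp = Δx i * Δs i + d := by
    intro i
    rw [hprod_eq i]
    linarith only [hd]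
  have hcard : ((Finset.univ : Finset (Fin n ⊕ Fin n)).card : ℝ) = 2 * n := by
    simp [Fintype.card_sum]
    push_cast
    ring
  have hT : ∑ i, (Δx i * Δs i + d) ^ 2
      = (∑ i, (Δx i * Δs i) ^ 2) + (∑ i, Δx i * Δs i) * (2 * d)
        + (2 * n) * d ^ 2 := by
    calc ∑ i, (Δx i * Δs i + d) ^ 2
        = ∑ i, ((Δx i * Δs i) ^ 2 + (Δx i * Δs i) * (2 * d) + d ^ 2) := by
          exact Finset.sum_congr rfl fun i _ => by ring
      _ = (∑ i, (Δx i * Δs i) ^ 2) + (∑ i, Δx i * Δs i) * (2 * d)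
            + (2 * n) * d ^ 2 := by
          rw [Finset.sum_add_distrib, Finset.sum_add_distrib, ← Finset.sum_mul,
            Finset.sum_const, nsmul_eq_mul, hcard]
  -- Cauchy–Schwarz: (∑ a)² ≤ (∑ a²) · 2n
  have hCS : (∑ i, Δx i * Δs i) ^ 2 ≤ (∑ i, (Δx i * Δs i) ^ 2) * (2 * n) := by
    have h := Finset.sum_mul_sq_le_sq_mul_sq Finset.univ (fun i => Δx i * Δs i)
      (fun _ => (1:ℝ))
    simp only [mul_one, one_pow, Finset.sum_const, Finset.card_univ, nsmul_eq_mul] at h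
    have hcard2 : ((Fintype.card (Fin n ⊕ Fin n)) : ℝ) = 2 * n := by
      simp [Fintype.card_sum]; push_cast; ring
    rw [hcard2] at h
    exact h
  have hS_le : (∑ i, Δx i * Δs i) ≤ r * (σ * τ) := by
    have hsq : (∑ i, Δx i * Δs i) ^ 2 ≤ (r * (σ * τ)) ^ 2 := by
      calc (∑ i, Δx i * Δs i) ^ 2 ≤ (∑ i, (Δx i * Δs i) ^ 2) * (2 * n) := hCS
        _ ≤ (σ ^ 2 * τ ^ 2 / 2) * (2 * n) := by
            apply mul_le_mul_of_nonneg_right hQ (by positivity)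
        _ ≤ (r * (σ * τ)) ^ 2 := by
            rw [mul_pow, hr2]
            have h := mul_nonneg (show (0:ℝ) ≤ (n:ℝ) from Nat.cast_nonneg n)
              (sq_nonneg (σ * τ))
            linarith only [h]
    nlinarith only [hS, mul_pos hr0 (mul_pos hσ0 hτ), hsq]
  have hrd2 : (2 * (n:ℝ)) * d ^ 2 = (r * d) ^ 2 := by rw [mul_pow, hr2]
  have hT_le : ∑ i, (Δx i * Δs i + d) ^ 2 ≤ (σ * τ + r * d) ^ 2 := by
    rw [hT]
    have h2 : (∑ i, Δx i * Δs i) * (2 * d) ≤ (r * (σ * τ)) * (2 * d) :=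
      mul_le_mul_of_nonneg_right hS_le (by linarith only [hd0])
    have h3 : (0:ℝ) ≤ (σ * τ) ^ 2 := sq_nonneg _
    linarith only [hQ, h2, hrd2, h3]
  have hfin : σ * τ + r * d = α * τp := by
    rw [hd_def', hτp]
    linear_combination τ * hβprod + β * τ * mul_inv_cancel₀ (ne_of_gt hr0)
  unfold enorm'
  have hfun : (fun i => xp i * sp i - τp) = fun i => Δx i * Δs i + d := funext hrw
  rw [hfun]
  calc Real.sqrt (∑ i, (Δx i * Δs i + d) ^ 2)
      ≤ Real.sqrt ((σ * τ + r * d) ^ 2) := Real.sqrt_le_sqrt hT_le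
    _ = σ * τ + r * d := Real.sqrt_sq (by positivity)
    _ = α * τp := hfin
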